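/- Quantum extractor trace-norm bound from the weighted 2-norm: for any extractor superoperator ψ and reference map τ (acting on the N system), and any cq or fully quantum state ρ_{NR}, ‖((ψ − τ) ⊗ id_R)(ρ_{NR})‖_1 ≤ 2·√(|M|·|D|) · √(⟨ρ̃_{NR}, ((ψ†∘ψ − τ†∘τ) ⊗ id_R)(ρ̃_{NR})⟩), where ρ̃_{NR} = (1 ⊗ ρ_R^{−1/4}) ρ_{NR} (1 ⊗ ρ_R^{−1/4}) and the output space of ψ, τ has dimension |M|·|D|. -/

import Mathlib

open Matrix Finset
open scoped ComplexOrder Kronecker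

/-- Trace norm: the sum of the singular values of `A`. -/
noncomputable def traceNorm {n : Type} [Fintype n] [DecidableEq n] (A : Matrix n n ℂ) : ℝ :=
  ∑ i, Real.sqrt ((Matrix.posSemidef_conjTranspose_mul_self A).1.eigenvalues i)

/-- Partial trace over the first system. -/
noncomputable def ptraceFst {n r : Type} [Fintype n] [Fintype r]
    (A : Matrix (n × r) (n × r) ℂ) : Matrix r r ℂ :=
  Matrix.of fun a b => ∑ x : n, A (x, a) (x, b)

/-- The extension `Φ ⊗ id_R` of a superoperator `Φ` on the `N` system. -/
noncomputable def extendR {n o r : Type} [Fintype n] [Fintype o] [Fintype r]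
    (Φ : Matrix n n ℂ →ₗ[ℂ] Matrix o o ℂ)
    (X : Matrix (n × r) (n × r) ℂ) : Matrix (o × r) (o × r) ℂ :=
  Matrix.of fun a b => Φ (Matrix.of fun x y => X (x, a.2) (y, b.2)) a.1 b.1

/-! ### Auxiliary machinery -/

set_option linter.unusedSectionVars false
set_option maxHeartbeats 2000000

section SpectralAux

variable {m : Type} [Fintype m] [DecidableEq m]

lemma trace_unitary_conj (U : Matrix.unitaryGroup m ℂ) (d : m → ℂ) :
    ((U : Matrix m m ℂ) * Matrix.diagonal d * (star U : Matrix m m ℂ)).trace = ∑ i, d i := by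
  rw [Matrix.trace_mul_cycle, Matrix.mem_unitaryGroup_iff'.mp U.2, Matrix.one_mul,
    Matrix.trace_diagonal]

/-- functional calculus for a hermitian matrix -/
noncomputable def Mf {X : Matrix m m ℂ} (hX : X.IsHermitian) (f : ℝ → ℝ) : Matrix m m ℂ :=
  (hX.eigenvectorUnitary : Matrix m m ℂ) *
    Matrix.diagonal (fun i => (f (hX.eigenvalues i) : ℂ)) *
    (star hX.eigenvectorUnitary : Matrix m m ℂ)

lemma Mf_mul {X : Matrix m m ℂ} (hX : X.IsHermitian) (f g : ℝ → ℝ) :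
    Mf hX f * Mf hX g = Mf hX (fun x => f x * g x) := by
  unfold Mf
  set U : Matrix m m ℂ := (hX.eigenvectorUnitary : Matrix m m ℂ) with hU
  have h1 : star U * U = 1 := Matrix.mem_unitaryGroup_iff'.mp hX.eigenvectorUnitary.2
  simp only [Matrix.mul_assoc]
  rw [← Matrix.mul_assoc (star U) U, h1, Matrix.one_mul,
    ← Matrix.mul_assoc (Matrix.diagonal _) (Matrix.diagonal _), Matrix.diagonal_mul_diagonal]
  simp [Complex.ofReal_mul, Matrix.mul_assoc]

lemma Mf_trace {X : Matrix m m ℂ} (hX : X.IsHermitian) (f : ℝ → ℝ) :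
    (Mf hX f).trace = ∑ i, (f (hX.eigenvalues i) : ℂ) :=
  trace_unitary_conj _ _

lemma Mf_id {X : Matrix m m ℂ} (hX : X.IsHermitian) : Mf hX (fun x => x) = X := by
  conv_rhs => rw [hX.spectral_theorem]
  rfl

lemma Mf_one {X : Matrix m m ℂ} (hX : X.IsHermitian) : Mf hX (fun _ => 1) = 1 := by
  unfold Mf
  simp [Matrix.diagonal_one, Matrix.mem_unitaryGroup_iff.mp hX.eigenvectorUnitary.2]

lemma Mf_sub {X : Matrix m m ℂ} (hX : X.IsHermitian) (f g : ℝ → ℝ) :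
    Mf hX f - Mf hX g = Mf hX (fun x => f x - g x) := by
  unfold Mf
  rw [← Matrix.sub_mul, ← Matrix.mul_sub, Matrix.diagonal_sub]
  push_cast
  rfl

lemma Mf_posSemidef {X : Matrix m m ℂ} (hX : X.IsHermitian) {f : ℝ → ℝ}
    (hf : ∀ x, 0 ≤ f x) : (Mf hX f).PosSemidef := by
  unfold Mf
  rw [Matrix.star_eq_conjTranspose]
  exact (Matrix.posSemidef_diagonal_iff.mpr fun i => by
    simpa using Complex.zero_le_real.mpr (hf _)).mul_mul_conjTranspose_same _

lemma trace_psd_nonneg {A : Matrix m m ℂ} (hA : A.PosSemidef) : 0 ≤ A.trace := by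
  rw [Matrix.trace]
  apply Finset.sum_nonneg
  intro i _
  have h := hA.dotProduct_mulVec_nonneg (Pi.single i 1)
  simpa [dotProduct, Matrix.mulVec, Pi.single_apply, Finset.sum_ite_eq,
    Matrix.diag] using h

open scoped MatrixOrder in
lemma Mf_sqrt_unique {A S : Matrix m m ℂ} (hA : A.PosSemidef) (hS : S.PosSemidef)
    (h : S ^ 2 = A) : S = Mf hA.1 Real.sqrt := by
  have e1 : CFC.sqrt A = S := CFC.sqrt_unique (by rw [← sq]; exact h) hS.nonneg
  rw [← e1, CFC.sqrt_eq_cfc, cfc_nnreal_eq_real _ A hA.nonneg, hA.1.cfc_eq]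
  unfold Mf Matrix.IsHermitian.cfc
  rw [Unitary.conjStarAlgAut_apply]
  refine congrArg (· * _) (congrArg (_ * ·) (congrArg Matrix.diagonal (funext fun i => ?_)))
  simp only [Function.comp_apply, Real.coe_sqrt, Real.coe_toNNReal _ (hA.eigenvalues_nonneg i)]
  rfl

lemma Mf_sqrt_mul_self {F : Matrix m m ℂ} (hF : F.PosSemidef) :
    Mf hF.1 Real.sqrt * Mf hF.1 Real.sqrt = F := by
  rw [Mf_mul]
  conv_rhs => rw [← Mf_id hF.1]
  unfold Mf
  simp only [Real.mul_self_sqrt (hF.eigenvalues_nonneg _)]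

lemma psd_eq_conjT_mul_self {A : Matrix m m ℂ} (hA : A.PosSemidef) :
    ∃ c : Matrix m m ℂ, A = cᴴ * c :=
  ⟨Mf hA.1 Real.sqrt, by rw [(Mf_posSemidef hA.1 Real.sqrt_nonneg).1, Mf_sqrt_mul_self hA]⟩

lemma trace_mul_psd_nonneg {F G : Matrix m m ℂ} (hF : F.PosSemidef) (hG : G.PosSemidef) :
    0 ≤ (F * G).trace := by
  have h1 : F = Mf hF.1 Real.sqrt * Mf hF.1 Real.sqrt := (Mf_sqrt_mul_self hF).symm
  rw [h1, Matrix.mul_assoc, Matrix.trace_mul_comm]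
  have h2 := hG.mul_mul_conjTranspose_same (Mf hF.1 Real.sqrt)
  rw [(Mf_posSemidef hF.1 Real.sqrt_nonneg).1] at h2
  exact trace_psd_nonneg h2

lemma traceNorm_exists_dual (X : Matrix m m ℂ) (hX : X.IsHermitian) (h0 : X.trace = 0) :
    ∃ E : Matrix m m ℂ, E.PosSemidef ∧ ((1 : Matrix m m ℂ) - E).PosSemidef ∧
      traceNorm X = 2 * ((X * E).trace.re) := by
  classical
  set μ := hX.eigenvalues with hμ
  set χ : ℝ → ℝ := fun x => if 0 < x then 1 else 0 with hχ
  refine ⟨Mf hX χ, Mf_posSemidef hX (fun x => by by_cases h : 0 < x <;> simp [hχ, h]), ?_, ?_⟩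
  · rw [← Mf_one hX, Mf_sub]
    exact Mf_posSemidef hX (fun x => by by_cases h : 0 < x <;> simp [hχ, h])
  · have hsum0 : ∑ i, μ i = 0 := by
      have h1 := Mf_trace hX (fun x => x)
      rw [Mf_id, h0] at h1
      exact_mod_cast h1.symm
    have hXE : X * Mf hX χ = Mf hX (fun x => max x 0) := by
      have hm := Mf_mul hX (fun x => x) χ
      rw [Mf_id] at hm
      have hfun : (fun x : ℝ => x * χ x) = fun x : ℝ => max x 0 := by
        funext x
        by_cases h : 0 < x
        · simp [hχ, h, max_eq_left h.le]
        · simp [hχ, h, max_eq_right (not_lt.mp h)]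
      rw [hm, hfun]
    have htrXE : (X * Mf hX χ).trace.re = ∑ i, max (μ i) 0 := by
      rw [hXE, Mf_trace]
      rw [← Complex.ofReal_sum]
      exact Complex.ofReal_re _
    have hB := Matrix.posSemidef_conjTranspose_mul_self X
    have hS : (Mf hX (fun x => |x|)).PosSemidef := Mf_posSemidef hX (fun x => abs_nonneg x)
    have hsq : (Mf hX (fun x => |x|)) ^ 2 = Xᴴ * X := by
      rw [pow_two, Mf_mul]
      have h2 : (fun x => |x| * |x|) = fun x : ℝ => x * x := by
        funext x; exact abs_mul_abs_self x
      have hm := Mf_mul hX (fun x => x) (fun x => x)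
      rw [Mf_id] at hm
      rw [h2, ← hm, hX.eq]
    have hSsqrt : Mf hX (fun x => |x|) = Mf hB.1 Real.sqrt := Mf_sqrt_unique hB hS hsq
    have h3 : (Mf hB.1 Real.sqrt).trace = ∑ i, ((Real.sqrt (hB.1.eigenvalues i) : ℝ) : ℂ) := by
      exact Mf_trace _ _
    have h4 : traceNorm X = (Mf hB.1 Real.sqrt).trace.re := by
      rw [h3, ← Complex.ofReal_sum, Complex.ofReal_re]
      rfl
    have h5 : (Mf hB.1 Real.sqrt).trace.re = ∑ i, |μ i| := by
      rw [← hSsqrt, Mf_trace, ← Complex.ofReal_sum, Complex.ofReal_re]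
    rw [h4, h5, htrXE]
    have habs : ∀ a : ℝ, |a| = 2 * max a 0 - a := by
      intro a
      rcases le_or_gt a 0 with h | h
      · rw [abs_of_nonpos h, max_eq_right h]; ring
      · rw [abs_of_pos h, max_eq_left h.le]; ring
    calc ∑ i, |μ i| = ∑ i, (2 * max (μ i) 0 - μ i) := by simp_rw [habs]
      _ = 2 * ∑ i, max (μ i) 0 - ∑ i, μ i := by
          rw [Finset.sum_sub_distrib, Finset.mul_sum]
      _ = 2 * ∑ i, max (μ i) 0 := by rw [hsum0]; ring

lemma trace_conjTranspose_mul' {m' : Type} [Fintype m'] (A B : Matrix m' m' ℂ) :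
    (Aᴴ * B).trace = ∑ j, ∑ i, (starRingEnd ℂ) (A i j) * B i j := by
  simp [Matrix.trace, Matrix.mul_apply, Matrix.conjTranspose_apply, Matrix.diag]

lemma abs_trace_conjTranspose_mul_le (A B : Matrix m m ℂ) :
    ‖(Aᴴ * B).trace‖ ≤
      Real.sqrt ((Aᴴ * A).trace.re) * Real.sqrt ((Bᴴ * B).trace.re) := by
  let f : Matrix m m ℂ → EuclideanSpace ℂ (m × m) := fun C => WithLp.toLp 2 (fun p : m × m => C p.1 p.2)
  have h : ∀ C D : Matrix m m ℂ, (inner ℂ (f C) (f D) : ℂ) = (Cᴴ * D).trace := by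
    intro C D
    rw [trace_conjTranspose_mul', PiLp.inner_apply]
    simp only [RCLike.inner_apply, f, PiLp.toLp_apply]
    rw [Fintype.sum_prod_type]
    rw [Finset.sum_comm]
    exact Finset.sum_congr rfl fun _ _ => Finset.sum_congr rfl fun _ _ => mul_comm _ _
  have h2 := norm_inner_le_norm (𝕜 := ℂ) (f A) (f B)
  rw [h A B] at h2
  have hA : ‖f A‖ = Real.sqrt ((Aᴴ * A).trace.re) := by
    rw [@norm_eq_sqrt_re_inner ℂ, h A A]; rfl
  have hB : ‖f B‖ = Real.sqrt ((Bᴴ * B).trace.re) := by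
    rw [@norm_eq_sqrt_re_inner ℂ, h B B]; rfl
  rw [hA, hB] at h2
  exact h2

lemma eq_zero_of_trace_conjT_self {m' : Type} [Fintype m'] (A : Matrix m' m' ℂ)
    (h : (Aᴴ * A).trace = 0) : A = 0 := by
  rw [trace_conjTranspose_mul'] at h
  have key : ∀ p : m' × m', Complex.normSq (A p.1 p.2) = 0 := by
    have hs : ∑ p : m' × m', Complex.normSq (A p.1 p.2) = 0 := by
      have hc : ((∑ p : m' × m', Complex.normSq (A p.1 p.2) : ℝ) : ℂ) = 0 := by
        calc ((∑ p : m' × m', Complex.normSq (A p.1 p.2) : ℝ) : ℂ)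
            = ∑ p : m' × m', ((Complex.normSq (A p.1 p.2) : ℝ) : ℂ) := by push_cast; rfl
          _ = ∑ p : m' × m', (starRingEnd ℂ) (A p.1 p.2) * A p.1 p.2 := by
              simp_rw [Complex.normSq_eq_conj_mul_self]
          _ = ∑ i, ∑ j, (starRingEnd ℂ) (A i j) * A i j := Fintype.sum_prod_type _
          _ = 0 := by rw [← h]; exact Finset.sum_comm
      exact_mod_cast hc
    intro p
    exact (Finset.sum_eq_zero_iff_of_nonneg
      (fun i _ => Complex.normSq_nonneg _)).mp hs p (Finset.mem_univ p)
  ext i j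
  exact Complex.normSq_eq_zero.mp (key (i, j))

end SpectralAux

section ExtendAux

def blockOf {n r : Type} (X : Matrix (n × r) (n × r) ℂ) (e f : r) : Matrix n n ℂ :=
  Matrix.of fun x y => X (x, e) (y, f)

variable {n o r : Type} [Fintype n] [DecidableEq n] [Fintype o] [DecidableEq o]
  [Fintype r] [DecidableEq r]

lemma extendR_apply (Φ : Matrix n n ℂ →ₗ[ℂ] Matrix o o ℂ) (X : Matrix (n × r) (n × r) ℂ)
    (a b : o × r) : extendR Φ X a b = Φ (blockOf X a.2 b.2) a.1 b.1 := rfl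

lemma extendR_sub (ψ τ : Matrix n n ℂ →ₗ[ℂ] Matrix o o ℂ) (X : Matrix (n × r) (n × r) ℂ) :
    extendR (ψ - τ) X = extendR ψ X - extendR τ X := by
  ext a b
  simp [extendR]

lemma one_kron_mul_apply (s : Matrix r r ℂ) (X : Matrix (n × r) (n × r) ℂ) (x : n) (e : r)
    (j : n × r) : (((1 : Matrix n n ℂ) ⊗ₖ s) * X) (x, e) j = ∑ c, s e c * X (x, c) j := by
  rw [Matrix.mul_apply, Fintype.sum_prod_type_right]
  simp [Matrix.kroneckerMap_apply, Matrix.one_apply, ite_mul, zero_mul]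

lemma mul_one_kron_apply (s : Matrix r r ℂ) (X : Matrix (n × r) (n × r) ℂ) (i : n × r) (y : n)
    (f : r) : (X * ((1 : Matrix n n ℂ) ⊗ₖ s)) i (y, f) = ∑ d, X i (y, d) * s d f := by
  rw [Matrix.mul_apply, Fintype.sum_prod_type_right]
  simp [Matrix.kroneckerMap_apply, Matrix.one_apply, mul_ite, mul_zero, mul_comm]

lemma blockOf_kron_conj (s : Matrix r r ℂ) (X : Matrix (n × r) (n × r) ℂ) (e f : r) :
    blockOf (((1 : Matrix n n ℂ) ⊗ₖ s) * X * ((1 : Matrix n n ℂ) ⊗ₖ s)) e f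
      = ∑ c : r, ∑ d : r, (s e c * s d f) • blockOf X c d := by
  ext x y
  simp only [blockOf, Matrix.of_apply, Matrix.sum_apply, Matrix.smul_apply, smul_eq_mul]
  rw [mul_one_kron_apply]
  simp_rw [one_kron_mul_apply, Finset.sum_mul]
  rw [Finset.sum_comm]
  exact Finset.sum_congr rfl fun c _ => Finset.sum_congr rfl fun d _ => by ring

lemma extendR_conj (Φ : Matrix n n ℂ →ₗ[ℂ] Matrix o o ℂ) (s : Matrix r r ℂ)
    (X : Matrix (n × r) (n × r) ℂ) :
    extendR Φ (((1 : Matrix n n ℂ) ⊗ₖ s) * X * ((1 : Matrix n n ℂ) ⊗ₖ s))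
      = ((1 : Matrix o o ℂ) ⊗ₖ s) * extendR Φ X * ((1 : Matrix o o ℂ) ⊗ₖ s) := by
  ext a b
  obtain ⟨a1, a2⟩ := a
  obtain ⟨b1, b2⟩ := b
  rw [extendR_apply, blockOf_kron_conj, map_sum]
  simp only [map_sum, LinearMap.map_smul, Matrix.sum_apply, Matrix.smul_apply, smul_eq_mul]
  rw [mul_one_kron_apply]
  simp_rw [one_kron_mul_apply, Finset.sum_mul]
  rw [Finset.sum_comm]
  refine Finset.sum_congr rfl fun c _ => Finset.sum_congr rfl fun d _ => ?_
  rw [extendR_apply]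
  ring

/-- a ℂ-linear map preserving hermiticity commutes with conjTranspose -/
lemma map_conjT (Φ : Matrix n n ℂ →ₗ[ℂ] Matrix o o ℂ)
    (hΦ : ∀ M : Matrix n n ℂ, M.IsHermitian → (Φ M).IsHermitian) (M : Matrix n n ℂ) :
    Φ Mᴴ = (Φ M)ᴴ := by
  set H : Matrix n n ℂ := ((1 : ℂ)/2) • (M + Mᴴ) with hHdef
  set K : Matrix n n ℂ := (-(Complex.I)/2) • (M - Mᴴ) with hKdef
  have h12 : Complex.I * (-(Complex.I)/2) = 1/2 := by
    linear_combination (-(1:ℂ)/2) * Complex.I_mul_I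
  have hH : H.IsHermitian := by
    rw [Matrix.IsHermitian, hHdef, Matrix.conjTranspose_smul, Matrix.conjTranspose_add,
      Matrix.conjTranspose_conjTranspose]
    rw [show star ((1:ℂ)/2) = (1:ℂ)/2 by norm_num, add_comm]
  have hK : K.IsHermitian := by
    rw [Matrix.IsHermitian, hKdef, Matrix.conjTranspose_smul, Matrix.conjTranspose_sub,
      Matrix.conjTranspose_conjTranspose]
    rw [show star (-(Complex.I)/2) = Complex.I/2 by simp [Complex.star_def]]
    module
  have hM : M = H + Complex.I • K := by
    rw [hHdef, hKdef, smul_smul, h12]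
    module
  have hMH : Mᴴ = H - Complex.I • K := by
    rw [hHdef, hKdef, smul_smul, h12]
    module
  calc Φ Mᴴ = Φ H - Complex.I • Φ K := by rw [hMH, map_sub, LinearMap.map_smul Φ Complex.I K]
    _ = (Φ H)ᴴ - Complex.I • (Φ K)ᴴ := by rw [(hΦ _ hH).eq, (hΦ _ hK).eq]
    _ = (Φ M)ᴴ := by
        rw [hM, map_add, LinearMap.map_smul Φ Complex.I K, Matrix.conjTranspose_add,
          Matrix.conjTranspose_smul, Complex.star_def, Complex.conj_I]
        module

lemma blockOf_conjT {X : Matrix (n × r) (n × r) ℂ} (hX : X.IsHermitian) (e f : r) :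
    (blockOf X e f)ᴴ = blockOf X f e := by
  ext x y
  rw [Matrix.conjTranspose_apply, blockOf, blockOf, Matrix.of_apply, Matrix.of_apply]
  conv_rhs => rw [← hX]
  rw [Matrix.conjTranspose_apply]

lemma extendR_isHermitian (Φ : Matrix n n ℂ →ₗ[ℂ] Matrix o o ℂ)
    (hΦc : ∀ M : Matrix n n ℂ, Φ Mᴴ = (Φ M)ᴴ) {X : Matrix (n × r) (n × r) ℂ}
    (hX : X.IsHermitian) : (extendR Φ X).IsHermitian := by
  rw [Matrix.IsHermitian]
  ext a b
  rw [Matrix.conjTranspose_apply, extendR_apply, extendR_apply, ← blockOf_conjT hX, hΦc,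
    Matrix.conjTranspose_apply]
  exact star_star _

lemma one_kron_conjT (s : Matrix r r ℂ) :
    ((1 : Matrix n n ℂ) ⊗ₖ s)ᴴ = (1 : Matrix n n ℂ) ⊗ₖ sᴴ := by
  ext a b
  obtain ⟨a1, a2⟩ := a
  obtain ⟨b1, b2⟩ := b
  by_cases h : a1 = b1
  · subst h
    simp [Matrix.conjTranspose_apply, Matrix.one_apply, star_mul']
  · simp only [Matrix.conjTranspose_apply, Matrix.kroneckerMap_apply, Matrix.one_apply,
      star_mul']
    simp [h]
    exact fun he => absurd he.symm h

lemma trace_blockOf (X : Matrix (n × r) (n × r) ℂ) (e f : r) :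
    (blockOf X e f).trace = ptraceFst X e f := by
  simp [blockOf, ptraceFst, Matrix.trace, Matrix.diag]

lemma ptraceFst_trace (X : Matrix (n × r) (n × r) ℂ) :
    (ptraceFst X).trace = X.trace := by
  rw [Matrix.trace, Matrix.trace, Fintype.sum_prod_type_right]
  simp [ptraceFst, Matrix.diag]

lemma ptraceFst_isHermitian {X : Matrix (n × r) (n × r) ℂ} (hX : X.IsHermitian) :
    (ptraceFst X).IsHermitian := by
  rw [Matrix.IsHermitian]
  ext a b
  rw [Matrix.conjTranspose_apply, ptraceFst, Matrix.of_apply, Matrix.of_apply, star_sum]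
  refine Finset.sum_congr rfl fun x _ => ?_
  conv_rhs => rw [← hX]
  rw [Matrix.conjTranspose_apply]

lemma ptraceFst_posSemidef {X : Matrix (n × r) (n × r) ℂ} (hX : X.PosSemidef) :
    (ptraceFst X).PosSemidef := by
  have hdec : ptraceFst X
      = ∑ m : n, X.submatrix (fun a : r => (m, a)) (fun a : r => (m, a)) := by
    ext a b
    simp [ptraceFst, Matrix.sum_apply]
  rw [hdec]
  refine Finset.sum_induction _ _ (fun A B hA hB => hA.add hB) Matrix.PosSemidef.zero
    fun m _ => hX.submatrix _

lemma trace_mul_one_kron (A : Matrix (n × r) (n × r) ℂ) (P : Matrix r r ℂ) :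
    (A * ((1 : Matrix n n ℂ) ⊗ₖ P)).trace = (ptraceFst A * P).trace := by
  simp only [Matrix.trace, Matrix.diag, Matrix.mul_apply, Matrix.kroneckerMap_apply,
    Matrix.one_apply, ite_mul, one_mul, zero_mul, mul_ite, mul_zero]
  rw [Fintype.sum_prod_type_right]
  simp only [Fintype.sum_prod_type_right, Finset.sum_ite_eq', Finset.mem_univ, if_true]
  simp only [ptraceFst, Matrix.of_apply, Finset.sum_mul]
  refine Finset.sum_congr rfl fun a _ => ?_
  rw [Finset.sum_comm]

lemma one_kron_posSemidef {w : Matrix r r ℂ} (hw : w.PosSemidef) :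
    ((1 : Matrix n n ℂ) ⊗ₖ w).PosSemidef := by
  obtain ⟨c, hc⟩ := psd_eq_conjT_mul_self hw
  have key : (1 : Matrix n n ℂ) ⊗ₖ w
      = ((1 : Matrix n n ℂ) ⊗ₖ c)ᴴ * ((1 : Matrix n n ℂ) ⊗ₖ c) := by
    rw [one_kron_conjT, ← Matrix.mul_kronecker_mul, Matrix.one_mul, ← hc]
  rw [key]
  exact Matrix.posSemidef_conjTranspose_mul_self _

lemma trace_extendR (Φ : Matrix n n ℂ →ₗ[ℂ] Matrix o o ℂ) (X : Matrix (n × r) (n × r) ℂ) :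
    (extendR Φ X).trace = ∑ e : r, (Φ (blockOf X e e)).trace := by
  rw [Matrix.trace, Fintype.sum_prod_type_right]
  rfl

section cross
variable [Nonempty o] {τ : Matrix n n ℂ →ₗ[ℂ] Matrix o o ℂ}
  (hτ : ∀ X : Matrix n n ℂ, τ X = (X.trace / (Fintype.card o : ℂ)) • (1 : Matrix o o ℂ))

include hτ in
lemma extendR_tau_apply (X : Matrix (n × r) (n × r) ℂ) (i j : o × r) :
    extendR τ X i j
      = (ptraceFst X i.2 j.2 / (Fintype.card o : ℂ)) * (if i.1 = j.1 then 1 else 0) := by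
  rw [extendR_apply, hτ, Matrix.smul_apply, Matrix.one_apply, trace_blockOf, smul_eq_mul]

include hτ in
lemma cross_left {Φ : Matrix n n ℂ →ₗ[ℂ] Matrix o o ℂ}
    (hΦ : ∀ M : Matrix n n ℂ, (Φ M).trace = M.trace) (X : Matrix (n × r) (n × r) ℂ) :
    ((extendR Φ X)ᴴ * extendR τ X).trace
      = ∑ f : r, ∑ e : r, (ptraceFst X e f / (Fintype.card o : ℂ)) *
          (starRingEnd ℂ) (ptraceFst X e f) := by
  rw [trace_conjTranspose_mul']
  simp only [extendR_tau_apply hτ, mul_ite, mul_one, mul_zero]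
  simp only [Fintype.sum_prod_type_right, Finset.sum_ite_eq', Finset.mem_univ, if_true]
  refine Finset.sum_congr rfl fun f _ => ?_
  rw [Finset.sum_comm]
  refine Finset.sum_congr rfl fun e _ => ?_
  have hA : ∀ j1 : o, (starRingEnd ℂ) (extendR Φ X (j1, e) (j1, f))
      = (starRingEnd ℂ) (Φ (blockOf X e f) j1 j1) := fun _ => rfl
  simp only [hA]
  rw [← Finset.sum_mul, ← map_sum]
  have : ∑ j1 : o, Φ (blockOf X e f) j1 j1 = (Φ (blockOf X e f)).trace := rfl
  rw [this, hΦ, trace_blockOf]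
  ring

include hτ in
lemma cross_right {Φ : Matrix n n ℂ →ₗ[ℂ] Matrix o o ℂ}
    (hΦ : ∀ M : Matrix n n ℂ, (Φ M).trace = M.trace) (X : Matrix (n × r) (n × r) ℂ) :
    ((extendR τ X)ᴴ * extendR Φ X).trace
      = ∑ f : r, ∑ e : r, (starRingEnd ℂ) (ptraceFst X e f / (Fintype.card o : ℂ)) *
          (ptraceFst X e f) := by
  rw [trace_conjTranspose_mul']
  simp only [extendR_tau_apply hτ, _root_.map_mul, apply_ite (starRingEnd ℂ), _root_.map_one,
    _root_.map_zero, ite_mul, zero_mul, mul_ite, mul_one, mul_zero]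
  simp only [Fintype.sum_prod_type_right, Finset.sum_ite_eq', Finset.mem_univ, if_true]
  refine Finset.sum_congr rfl fun f _ => ?_
  rw [Finset.sum_comm]
  refine Finset.sum_congr rfl fun e _ => ?_
  have hA : ∀ j1 : o, extendR Φ X (j1, e) (j1, f) = Φ (blockOf X e f) j1 j1 := fun _ => rfl
  simp only [hA]
  rw [← Finset.mul_sum]
  have : ∑ j1 : o, Φ (blockOf X e f) j1 j1 = (Φ (blockOf X e f)).trace := rfl
  rw [this, hΦ, trace_blockOf]
end cross

end ExtendAux

lemma re_le_of_le {z w : ℂ} (h : z ≤ w) : z.re ≤ w.re := (Complex.le_def.mp h).1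


/-- trace-norm bound from the weighted 2-norm.  For an extractor
superoperator `ψ` (trace- and hermiticity-preserving) and the reference map
`τ(X) = tr[X]·1/(|M||D|)` into an output space of dimension `|M||D| = card o`, and any
state `ρ_{NR}` with `ρ̃ = (1 ⊗ ρ_R^{−1/4}) ρ (1 ⊗ ρ_R^{−1/4})`:
`‖((ψ−τ) ⊗ id_R)(ρ)‖₁ ≤ 2 √(|M||D|) √(⟨ρ̃, ((ψ†∘ψ − τ†∘τ) ⊗ id_R)(ρ̃)⟩)`, where
`⟨ρ̃, ((ψ†∘ψ − τ†∘τ) ⊗ id)(ρ̃)⟩ = ‖(ψ ⊗ id)(ρ̃)‖₂² − ‖(τ ⊗ id)(ρ̃)‖₂²`. -/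
theorem trace_norm_bound_weighted
    {n o r : Type} [Fintype n] [DecidableEq n] [Fintype o] [DecidableEq o]
    [Fintype r] [DecidableEq r] [Nonempty o]
    (ψ τ : Matrix n n ℂ →ₗ[ℂ] Matrix o o ℂ)
    (hψtr : ∀ X : Matrix n n ℂ, (ψ X).trace = X.trace)
    (hψherm : ∀ X : Matrix n n ℂ, X.IsHermitian → (ψ X).IsHermitian)
    (hτ : ∀ X : Matrix n n ℂ, τ X = (X.trace / (Fintype.card o : ℂ)) • (1 : Matrix o o ℂ))
    (ρ : Matrix (n × r) (n × r) ℂ) (hρ : ρ.PosSemidef) (hρtr : ρ.trace = 1)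
    (ρR : Matrix r r ℂ) (hρReq : ρR = ptraceFst ρ)
    -- t = ρ_R^{−1/4}: the pseudo-inverse fourth root of ρ_R
    (t : Matrix r r ℂ) (ht : t.PosSemidef) (htc : ρR * t = t * ρR)
    (ht1 : ρR * (t * t * t * t) * ρR = ρR)
    (ht2 : (t * t * t * t) * ρR * (t * t * t * t) = t * t * t * t) :
    traceNorm (extendR (ψ - τ) ρ)
      ≤ 2 * Real.sqrt (Fintype.card o) *
        Real.sqrt
          ((((extendR ψ (((1 : Matrix n n ℂ) ⊗ₖ t) * ρ * ((1 : Matrix n n ℂ) ⊗ₖ t)))ᴴ *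
              (extendR ψ (((1 : Matrix n n ℂ) ⊗ₖ t) * ρ * ((1 : Matrix n n ℂ) ⊗ₖ t)))).trace).re
          - (((extendR τ (((1 : Matrix n n ℂ) ⊗ₖ t) * ρ * ((1 : Matrix n n ℂ) ⊗ₖ t)))ᴴ *
              (extendR τ (((1 : Matrix n n ℂ) ⊗ₖ t) * ρ * ((1 : Matrix n n ℂ) ⊗ₖ t)))).trace).re) := by
  classical
  have hcard : (Fintype.card o : ℂ) ≠ 0 := Nat.cast_ne_zero.mpr Fintype.card_ne_zero
  -- τ properties
  have hτtr : ∀ M : Matrix n n ℂ, (τ M).trace = M.trace := by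
    intro M
    rw [hτ M, Matrix.trace_smul, Matrix.trace_one, smul_eq_mul]
    field_simp
  have hτherm : ∀ M : Matrix n n ℂ, M.IsHermitian → (τ M).IsHermitian := by
    intro M hM
    rw [hτ M, Matrix.IsHermitian, Matrix.conjTranspose_smul, Matrix.conjTranspose_one]
    congr 1
    have h1 : star M.trace = M.trace := by
      rw [← Matrix.trace_conjTranspose, hM.eq]
    rw [star_div₀, h1, star_natCast]
  have hsubherm : ∀ M : Matrix n n ℂ, M.IsHermitian → ((ψ - τ) M).IsHermitian := by
    intro M hM
    rw [LinearMap.sub_apply]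
    exact (hψherm M hM).sub (hτherm M hM)
  have hsubconj := map_conjT (ψ - τ) hsubherm
  -- commuting toolkit
  have hc : Commute ρR t := htc
  have c2 : Commute ρR (t * t) := hc.mul_right hc
  have c3 : Commute ρR (t * t * t) := c2.mul_right hc
  have c4 : Commute ρR (t * t * t * t) := c3.mul_right hc
  have hρRh : ρR.IsHermitian := by rw [hρReq]; exact ptraceFst_isHermitian hρ.1
  have hρRpsd : ρR.PosSemidef := by rw [hρReq]; exact ptraceFst_posSemidef hρ
  have hρRtr : ρR.trace = 1 := by rw [hρReq, ptraceFst_trace, hρtr]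
  set s : Matrix r r ℂ := ρR * (t * t * t) with hs_def
  set w : Matrix r r ℂ := ρR * (t * t) with hw_def
  set P : Matrix r r ℂ := ρR * (t * t * t * t) with hP_def
  have hth : tᴴ = t := ht.1
  have hwt : w * t = s := by rw [hw_def, hs_def]; noncomm_ring
  have htw : t * w = s := by
    rw [hw_def, hs_def, ← Matrix.mul_assoc, ← htc]; noncomm_ring
  have hss : s * s = w := by
    calc s * s = (w * t) * (t * w) := by rw [hwt, htw]
      _ = ρR * (t * t * t * t) * w := by rw [hw_def]; noncomm_ring
      _ = ρR * (t * t * t * t) * ρR * (t * t) := by rw [hw_def]; noncomm_ring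
      _ = ρR * (t * t) := by rw [ht1]
      _ = w := hw_def.symm
  have hww : w * w = ρR := by
    have h1 : w * w = ρR * (t * t * t * t) * ρR := by
      rw [hw_def]
      nth_rewrite 2 [c2.eq]
      noncomm_ring
    rw [h1, ht1]
  have hst : s * t = P := by rw [hs_def, hP_def]; noncomm_ring
  have hts : t * s = P := by
    rw [hs_def, hP_def, ← Matrix.mul_assoc, ← htc]; noncomm_ring
  have hPP : P * P = P := by
    have h1 : P * P = ρR * ((t * t * t * t) * ρR * (t * t * t * t)) := by
      rw [hP_def]; noncomm_ring
    rw [h1, ht2, hP_def]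
  have hPh : Pᴴ = P := by
    rw [hP_def, Matrix.conjTranspose_mul, hρRh.eq]
    have h4 : (t * t * t * t)ᴴ = t * t * t * t := by
      simp [Matrix.conjTranspose_mul, hth, Matrix.mul_assoc]
    rw [h4, ← c4.eq]
  have hsh : sᴴ = s := by
    rw [hs_def, Matrix.conjTranspose_mul, hρRh.eq]
    have h3 : (t * t * t)ᴴ = t * t * t := by
      simp [Matrix.conjTranspose_mul, hth, Matrix.mul_assoc]
    rw [h3, ← c3.eq]
  have hwh : wᴴ = w := by
    rw [hw_def, Matrix.conjTranspose_mul, hρRh.eq]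
    have h2' : (t * t)ᴴ = t * t := by simp [Matrix.conjTranspose_mul, hth]
    rw [h2', ← c2.eq]
  -- σ = ρ̃
  set σ : Matrix (n × r) (n × r) ℂ
    := ((1 : Matrix n n ℂ) ⊗ₖ t) * ρ * ((1 : Matrix n n ℂ) ⊗ₖ t) with hσ_def
  have hσh : σ.IsHermitian := by
    rw [Matrix.IsHermitian, hσ_def, Matrix.conjTranspose_mul, Matrix.conjTranspose_mul,
      one_kron_conjT, hth, hρ.1.eq]
    noncomm_ring
  -- support projection
  set J : Matrix (n × r) (n × r) ℂ := (1 : Matrix n n ℂ) ⊗ₖ P with hJ_def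
  have hJh : Jᴴ = J := by rw [hJ_def, one_kron_conjT, hPh]
  have hJ2 : J * J = J := by
    rw [hJ_def, ← Matrix.mul_kronecker_mul, Matrix.one_mul, hPP]
  have htrρJ : (ρ * J).trace = 1 := by
    rw [hJ_def, trace_mul_one_kron, ← hρReq, Matrix.trace_mul_comm, hP_def, ht1, hρRtr]
  have hρJ : ρ * J = ρ := by
    obtain ⟨C0, hC0⟩ := psd_eq_conjT_mul_self hρ
    set K : Matrix (n × r) (n × r) ℂ := 1 - J with hK_def
    have hKh : Kᴴ = K := by
      rw [hK_def, Matrix.conjTranspose_sub, Matrix.conjTranspose_one, hJh]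
    have hK2 : K * K = K := by
      have e1 : K * K = 1 - J - J + J * J := by rw [hK_def]; noncomm_ring
      rw [e1, hJ2, hK_def]
      abel
    have h0 : ((C0 * K)ᴴ * (C0 * K)).trace = 0 := by
      have e2 : (C0 * K)ᴴ * (C0 * K) = K * ρ * K := by
        rw [Matrix.conjTranspose_mul, hKh, hC0]; noncomm_ring
      rw [e2, Matrix.trace_mul_cycle, hK2, hK_def, Matrix.sub_mul, Matrix.one_mul,
        Matrix.trace_sub, hρtr, Matrix.trace_mul_comm, htrρJ, sub_self]
    have hCK : C0 * K = 0 := eq_zero_of_trace_conjT_self _ h0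
    have hρK : ρ * K = 0 := by rw [hC0, Matrix.mul_assoc, hCK, Matrix.mul_zero]
    rw [hK_def, Matrix.mul_sub, Matrix.mul_one] at hρK
    exact (sub_eq_zero.mp hρK).symm
  have hJρ : J * ρ = ρ := by
    have h := congrArg Matrix.conjTranspose hρJ
    rwa [Matrix.conjTranspose_mul, hJh, hρ.1.eq] at h
  -- reconstruction of ρ from σ
  have hρσ : ((1 : Matrix n n ℂ) ⊗ₖ s) * σ * ((1 : Matrix n n ℂ) ⊗ₖ s) = ρ := by
    have e1 : ((1 : Matrix n n ℂ) ⊗ₖ s) * σ * ((1 : Matrix n n ℂ) ⊗ₖ s)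
        = (((1 : Matrix n n ℂ) ⊗ₖ s) * ((1 : Matrix n n ℂ) ⊗ₖ t)) * ρ *
          (((1 : Matrix n n ℂ) ⊗ₖ t) * ((1 : Matrix n n ℂ) ⊗ₖ s)) := by
      rw [hσ_def]; noncomm_ring
    rw [e1, ← Matrix.mul_kronecker_mul, ← Matrix.mul_kronecker_mul, Matrix.one_mul,
      hst, hts, ← hJ_def, hJρ, hρJ]
  -- main objects
  set Go : Matrix (o × r) (o × r) ℂ := (1 : Matrix o o ℂ) ⊗ₖ s with hGo_def
  have hGoh : Goᴴ = Go := by rw [hGo_def, one_kron_conjT, hsh]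
  set Y : Matrix (o × r) (o × r) ℂ := extendR (ψ - τ) σ with hY_def
  set X : Matrix (o × r) (o × r) ℂ := extendR (ψ - τ) ρ with hX_def
  have hYh : Y.IsHermitian := extendR_isHermitian _ hsubconj hσh
  have hXh : X.IsHermitian := extendR_isHermitian _ hsubconj hρ.1
  have hXtr : X.trace = 0 := by
    rw [hX_def, trace_extendR]
    refine Finset.sum_eq_zero fun e _ => ?_
    rw [LinearMap.sub_apply, Matrix.trace_sub, hψtr, hτtr, sub_self]
  obtain ⟨E, hE, hE1, hXnorm⟩ := traceNorm_exists_dual X hXh hXtr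
  have hXY : X = Go * Y * Go := by
    rw [hX_def, ← hρσ, extendR_conj, ← hY_def, ← hGo_def]
  set B : Matrix (o × r) (o × r) ℂ := Go * E * Go with hB_def
  have htrXE : (X * E).trace = (Yᴴ * B).trace := by
    rw [hYh.eq]
    calc (X * E).trace = (Go * (Y * (Go * E))).trace := by
          rw [hXY]; congr 1; noncomm_ring
      _ = ((Y * (Go * E)) * Go).trace := Matrix.trace_mul_comm _ _
      _ = (Y * B).trace := by rw [hB_def]; congr 1; noncomm_ring
  -- bound on B
  set W : Matrix (o × r) (o × r) ℂ := (1 : Matrix o o ℂ) ⊗ₖ w with hW_def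
  have hWh : Wᴴ = W := by rw [hW_def, one_kron_conjT, hwh]
  have hGG : Go * Go = W := by
    rw [hGo_def, hW_def, ← Matrix.mul_kronecker_mul, Matrix.one_mul, hss]
  have hWW : W * W = (1 : Matrix o o ℂ) ⊗ₖ ρR := by
    rw [hW_def, ← Matrix.mul_kronecker_mul, Matrix.one_mul, hww]
  have hBh : Bᴴ = B := by
    rw [hB_def, Matrix.conjTranspose_mul, Matrix.conjTranspose_mul, hGoh, hE.1.eq]
    noncomm_ring
  have hBB : (Bᴴ * B).trace = ((W * E * W) * E).trace := by
    rw [hBh]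
    calc (B * B).trace = (Go * ((E * W * E) * Go)).trace := by
          rw [hB_def, ← hGG]; congr 1; noncomm_ring
      _ = (((E * W * E) * Go) * Go).trace := Matrix.trace_mul_comm _ _
      _ = ((E * W * E) * (Go * Go)).trace := by congr 1; noncomm_ring
      _ = ((E * W * E) * W).trace := by rw [hGG]
      _ = ((W * E * W) * E).trace := by
          rw [Matrix.trace_mul_comm]; congr 1; noncomm_ring
  have hFpsd : (W * E * W).PosSemidef := by
    have h := hE.mul_mul_conjTranspose_same W
    rwa [hWh] at h
  have hkronρR : ((1 : Matrix o o ℂ) ⊗ₖ ρR).PosSemidef := one_kron_posSemidef hρRpsd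
  have hstep1 : ((W * E * W) * E).trace.re ≤ (W * E * W).trace.re := by
    have h := trace_mul_psd_nonneg hFpsd hE1
    have e : (W * E * W) * ((1 : Matrix (o × r) (o × r) ℂ) - E)
        = (W * E * W) - (W * E * W) * E := by rw [Matrix.mul_sub, Matrix.mul_one]
    rw [e, Matrix.trace_sub] at h
    have h' := re_le_of_le h
    rw [Complex.sub_re] at h'
    simp only [Complex.zero_re] at h'
    linarith
  have hstep2 : (W * E * W).trace = (((1 : Matrix o o ℂ) ⊗ₖ ρR) * E).trace := by
    rw [Matrix.trace_mul_cycle, hWW]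
  have hstep3 : ((((1 : Matrix o o ℂ) ⊗ₖ ρR)) * E).trace.re ≤ (Fintype.card o : ℝ) := by
    have h := trace_mul_psd_nonneg hkronρR hE1
    have e : ((1 : Matrix o o ℂ) ⊗ₖ ρR) * ((1 : Matrix (o × r) (o × r) ℂ) - E)
        = ((1 : Matrix o o ℂ) ⊗ₖ ρR) - ((1 : Matrix o o ℂ) ⊗ₖ ρR) * E := by
      rw [Matrix.mul_sub, Matrix.mul_one]
    rw [e, Matrix.trace_sub] at h
    have h' := re_le_of_le h
    rw [Complex.sub_re] at h'
    simp only [Complex.zero_re] at h'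
    have h2 : ((1 : Matrix o o ℂ) ⊗ₖ ρR).trace = (Fintype.card o : ℂ) := by
      rw [Matrix.trace_kronecker, Matrix.trace_one, hρRtr, mul_one]
    have h3 : ((1 : Matrix o o ℂ) ⊗ₖ ρR).trace.re = (Fintype.card o : ℝ) := by
      rw [h2]; simp
    linarith
  have hBBle : (Bᴴ * B).trace.re ≤ (Fintype.card o : ℝ) := by
    calc (Bᴴ * B).trace.re = ((W * E * W) * E).trace.re := by rw [hBB]
      _ ≤ (W * E * W).trace.re := hstep1
      _ = ((((1 : Matrix o o ℂ) ⊗ₖ ρR)) * E).trace.re := by rw [hstep2]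
      _ ≤ (Fintype.card o : ℝ) := hstep3
  -- cross terms
  set Aψ : Matrix (o × r) (o × r) ℂ := extendR ψ σ with hA_def
  set Cτ : Matrix (o × r) (o × r) ℂ := extendR τ σ with hC_def
  have hYAC : Y = Aψ - Cτ := by rw [hY_def, extendR_sub, ← hA_def, ← hC_def]
  have hcross1 : (Aψᴴ * Cτ).trace = (Cτᴴ * Cτ).trace := by
    rw [hA_def, hC_def, cross_left hτ hψtr σ]
    exact (cross_left hτ hτtr σ).symm
  have hcross2 : (Cτᴴ * Aψ).trace = (Cτᴴ * Cτ).trace := by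
    rw [hA_def, hC_def, cross_right hτ hψtr σ]
    exact (cross_right hτ hτtr σ).symm
  have hYY : (Yᴴ * Y).trace = (Aψᴴ * Aψ).trace - (Cτᴴ * Cτ).trace := by
    have e : Yᴴ * Y = (Aψᴴ * Aψ - Aψᴴ * Cτ) - (Cτᴴ * Aψ - Cτᴴ * Cτ) := by
      rw [hYAC, Matrix.conjTranspose_sub]
      noncomm_ring
    rw [e, Matrix.trace_sub, Matrix.trace_sub, Matrix.trace_sub, hcross1, hcross2]
    ring
  -- final chain
  rw [hXnorm]
  have hRHSarg : (Aψᴴ * Aψ).trace.re - (Cτᴴ * Cτ).trace.re = (Yᴴ * Y).trace.re := by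
    rw [hYY, Complex.sub_re]
  rw [hRHSarg]
  have hb1 : (X * E).trace.re ≤ ‖(Yᴴ * B).trace‖ := by
    rw [htrXE]
    exact Complex.re_le_norm _
  have hb2 := abs_trace_conjTranspose_mul_le Y B
  have hb3 : Real.sqrt ((Bᴴ * B).trace.re) ≤ Real.sqrt (Fintype.card o) :=
    Real.sqrt_le_sqrt hBBle
  have hsqY : (0:ℝ) ≤ Real.sqrt ((Yᴴ * Y).trace.re) := Real.sqrt_nonneg _
  calc 2 * (X * E).trace.re
      ≤ 2 * (Real.sqrt ((Yᴴ * Y).trace.re) * Real.sqrt ((Bᴴ * B).trace.re)) := by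
        have := hb1.trans hb2
        linarith
    _ ≤ 2 * (Real.sqrt ((Yᴴ * Y).trace.re) * Real.sqrt (Fintype.card o)) := by
        have := mul_le_mul_of_nonneg_left hb3 hsqY
        linarith
    _ = 2 * Real.sqrt (Fintype.card o) * Real.sqrt ((Yᴴ * Y).trace.re) := by ring
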